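/- Let ε > 0, let N be a positive integer, let E and Ē be nonempty finite sets, and for each n ∈ {1, …, N} let s_n : E → ℝ and t_n : Ē → ℝ be functions with s_n(e) ≥ 0 and t_n(ē) ≥ 0 everywhere. Suppose there exist an edge e ∈ E and indices m, n with s_m(e) ≠ s_n(e). Then, with L(s, t) = (1/|E|)·∑_{e ∈ E} (−log(1 − exp(−ε − s(e)))) + (1/|Ē|)·∑_{ē ∈ Ē} t(ē) and s̄ = (1/N)·∑_n s_n, t̄ = (1/N)·∑_n t_n, the inequality is strict: L(s̄, t̄) < (1/N)·∑_{n=1}^{N} L(s_n, t_n). (The positive-pair term of the Bernoulli–Poisson loss is strictly convex in the similarity score, so the fusion inequality is strict whenever the individual similarity scores disagree on some connected pair.) -/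

import Mathlib

open Real Set

lemma bp_hd1 (ε : ℝ) (x : ℝ) (hne : 1 - Real.exp (-ε - x) ≠ 0) :
    HasDerivAt (fun x : ℝ => -Real.log (1 - Real.exp (-ε - x)))
      (-(Real.exp (-ε - x) / (1 - Real.exp (-ε - x)))) x := by
  have h1 : HasDerivAt (fun x : ℝ => -ε - x) (-1) x := by
    simpa using (hasDerivAt_id x).const_sub (-ε)
  have h2 : HasDerivAt (fun x : ℝ => Real.exp (-ε - x)) (-Real.exp (-ε - x)) x := by
    exact ((Real.hasDerivAt_exp (-ε - x)).comp x h1).congr_deriv (by ring)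
  have h3 : HasDerivAt (fun x : ℝ => 1 - Real.exp (-ε - x)) (Real.exp (-ε - x)) x := by
    simpa using h2.const_sub 1
  exact (h3.log hne).neg

lemma bp_hd2 (ε : ℝ) (x : ℝ) (hne : 1 - Real.exp (-ε - x) ≠ 0) :
    HasDerivAt (fun x : ℝ => -(Real.exp (-ε - x) / (1 - Real.exp (-ε - x))))
      (Real.exp (-ε - x) / (1 - Real.exp (-ε - x)) ^ 2) x := by
  have h1 : HasDerivAt (fun x : ℝ => -ε - x) (-1) x := by
    simpa using (hasDerivAt_id x).const_sub (-ε)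
  have h2 : HasDerivAt (fun x : ℝ => Real.exp (-ε - x)) (-Real.exp (-ε - x)) x := by
    exact ((Real.hasDerivAt_exp (-ε - x)).comp x h1).congr_deriv (by ring)
  have h3 : HasDerivAt (fun x : ℝ => 1 - Real.exp (-ε - x)) (Real.exp (-ε - x)) x := by
    simpa using h2.const_sub 1
  have h4 := (h2.div h3 hne).neg
  exact h4.congr_deriv (by ring)

lemma bp_strictConvex (ε : ℝ) (hε : 0 < ε) :
    StrictConvexOn ℝ (Ioi (-ε)) (fun x : ℝ => -Real.log (1 - Real.exp (-ε - x))) := by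
  have hpos : ∀ x ∈ Ioi (-ε), 0 < 1 - Real.exp (-ε - x) := by
    intro x hx
    rw [mem_Ioi] at hx
    have : (-ε - x) < 0 := by linarith
    have := Real.exp_lt_one_iff.mpr this
    linarith
  apply strictConvexOn_of_deriv2_pos (convex_Ioi _)
  · intro x hx
    exact ((bp_hd1 ε x (ne_of_gt (hpos x hx))).continuousAt).continuousWithinAt
  · intro x hx
    rw [interior_Ioi] at hx
    have hderiv : ∀ y ∈ Ioi (-ε),
        deriv (fun x : ℝ => -Real.log (1 - Real.exp (-ε - x))) y
          = -(Real.exp (-ε - y) / (1 - Real.exp (-ε - y))) := fun y hy =>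
      (bp_hd1 ε y (ne_of_gt (hpos y hy))).deriv
    have heq : deriv^[2] (fun x : ℝ => -Real.log (1 - Real.exp (-ε - x))) x
        = Real.exp (-ε - x) / (1 - Real.exp (-ε - x)) ^ 2 := by
      have hev : deriv (fun x : ℝ => -Real.log (1 - Real.exp (-ε - x)))
          =ᶠ[nhds x] (fun y => -(Real.exp (-ε - y) / (1 - Real.exp (-ε - y)))) := by
        filter_upwards [isOpen_Ioi.mem_nhds hx] with y hy using hderiv y hy
      show deriv (deriv _) x = _
      rw [hev.deriv_eq]
      exact (bp_hd2 ε x (ne_of_gt (hpos x hx))).deriv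
    rw [heq]
    exact div_pos (Real.exp_pos _) (pow_pos (hpos x hx) 2)

/-- Strict risk reduction with fusion (overlapping community detection case):
if the individual similarity scores disagree on some connected pair, then the
Bernoulli–Poisson loss of the uniformly averaged similarity families is
strictly less than the average of the individual losses. -/theorem bp_loss_fused_lt_avg
    (ε : ℝ) (hε : 0 < ε) (N : ℕ) (hN : 0 < N)
    (E Ebar : Type*) [Fintype E] [Nonempty E] [Fintype Ebar] [Nonempty Ebar]
    (s : Fin N → E → ℝ) (t : Fin N → Ebar → ℝ)
    (hs : ∀ n e, 0 ≤ s n e) (ht : ∀ n eb, 0 ≤ t n eb)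
    (hdisagree : ∃ (e : E) (m n : Fin N), s m e ≠ s n e)
    (L : (E → ℝ) → (Ebar → ℝ) → ℝ)
    (hL : ∀ (s' : E → ℝ) (t' : Ebar → ℝ),
      L s' t' = (1 / (Fintype.card E : ℝ)) *
          ∑ e : E, -Real.log (1 - Real.exp (-ε - s' e)) +
        (1 / (Fintype.card Ebar : ℝ)) * ∑ eb : Ebar, t' eb) :
    L (fun e => (1 / (N : ℝ)) * ∑ n, s n e)
        (fun eb => (1 / (N : ℝ)) * ∑ n, t n eb) <
      (1 / (N : ℝ)) * ∑ n, L (s n) (t n) := by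
  classical
  set f : ℝ → ℝ := fun x => -Real.log (1 - Real.exp (-ε - x)) with hf
  have hNpos : (0 : ℝ) < N := Nat.cast_pos.mpr hN
  have hconv := bp_strictConvex ε hε
  have hw : ∑ _n : Fin N, (1 / (N : ℝ)) = 1 := by
    simp [Finset.sum_const, Finset.card_univ]
    field_simp
  have hmem : ∀ (e : E) (n : Fin N), s n e ∈ Ioi (-ε) := fun e n => by
    have := hs n e; simp [mem_Ioi]; linarith
  -- per-edge Jensen, non-strict
  have hle : ∀ e : E, f ((1 / (N : ℝ)) * ∑ n, s n e) ≤ (1 / (N : ℝ)) * ∑ n, f (s n e) := by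
    intro e
    have := hconv.convexOn.map_sum_le (t := Finset.univ) (w := fun _ => 1 / (N : ℝ))
      (p := fun n => s n e) (fun i _ => by positivity) hw (fun i _ => hmem e i)
    simpa only [smul_eq_mul, ← Finset.mul_sum] using this
  obtain ⟨e₀, m, n, hmn⟩ := hdisagree
  have hlt : f ((1 / (N : ℝ)) * ∑ n, s n e₀) < (1 / (N : ℝ)) * ∑ n, f (s n e₀) := by
    have := hconv.map_sum_lt (t := Finset.univ) (w := fun _ => 1 / (N : ℝ))
      (p := fun k => s k e₀) (fun i _ => by positivity) hw (fun i _ => hmem e₀ i)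
      ⟨m, Finset.mem_univ m, n, Finset.mem_univ n, hmn⟩
    simpa only [smul_eq_mul, ← Finset.mul_sum] using this
  have key : ∑ e : E, f ((1 / (N : ℝ)) * ∑ n, s n e)
      < ∑ e : E, (1 / (N : ℝ)) * ∑ n, f (s n e) :=
    Finset.sum_lt_sum (fun e _ => hle e) ⟨e₀, Finset.mem_univ e₀, hlt⟩
  rw [hL]
  have hRHS : (1 / (N : ℝ)) * ∑ n, L (s n) (t n)
      = (1 / (Fintype.card E : ℝ)) * ∑ e : E, ((1 / (N : ℝ)) * ∑ n, f (s n e))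
        + (1 / (Fintype.card Ebar : ℝ)) * ∑ eb : Ebar, ((1 / (N : ℝ)) * ∑ n, t n eb) := by
    simp only [hL]
    rw [Finset.sum_add_distrib, mul_add]
    congr 1
    · simp only [Finset.mul_sum]
      rw [Finset.sum_comm]
      exact Finset.sum_congr rfl fun e _ => Finset.sum_congr rfl fun k _ => by ring
    · simp only [Finset.mul_sum]
      rw [Finset.sum_comm]
      exact Finset.sum_congr rfl fun eb _ => Finset.sum_congr rfl fun k _ => by ring
  rw [hRHS]
  have hE : (0 : ℝ) < (1 / (Fintype.card E : ℝ)) := by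
    have : (0 : ℝ) < Fintype.card E := Nat.cast_pos.mpr Fintype.card_pos
    positivity
  exact add_lt_add_of_lt_of_le (mul_lt_mul_of_pos_left key hE) le_rfl
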